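/- arXiv:2006.07571 — 2 statements merged into one kernel-verified Lean document; each statement's English description precedes it below -/
import Mathlib

section
/- Let p be a probability density supported on M ⊆ ℝ^d that is uniformly Lebesgue approximable on M, and fix k ∈ ℤ⁺ and u ∈ ℝ. Let X_2,…,X_n be i.i.d. with density p, and for x ∈ M let F_{n,k,x}(u) := P(log((n−1)·ρ_k(1)^d) < u), where ρ_k(1) is the k-NN distance of x among {X_2,…,X_n}. Then for almost all x ∈ M, F_{n,k,x}(u) → F_{k,x}(u) := 1 − exp(−λ(x) e^u) · Σ_{j=0}^{k−1} (λ(x) e^u)^j / j! as n → ∞, where λ(x) := c̄ p(x) and c̄ is the Lebesgue volume of the d-dimensional unit ball. That is, F_{n,k,x} converges weakly to the log-Erlang distribution function F_{k,x}. -/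
open MeasureTheory Filter Topology

noncomputable section

abbrev Pt (d : ℕ) := EuclideanSpace ℝ (Fin d)

/-- k-th smallest distance (1-indexed) from `z` to the points of `P`:
the k-NN distance of `z` among `P`. -/
def kNNdist {d : ℕ} (k : ℕ) (P : List (Pt d)) (z : Pt d) : ℝ :=
  (List.insertionSort (· ≤ ·) (P.map (dist z))).getD (k - 1) 0

/-- `ρ_k(i)`: k-NN distance of `X i` among the other points of `X`. -/
def rho {d n : ℕ} (k : ℕ) (X : Fin n → Pt d) (i : Fin n) : ℝ :=
  kNNdist k ((List.ofFn X).eraseIdx (i : ℕ)) (X i)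

/-- `ν_k(i)`: k-NN distance of `X i` among the points of `Y`. -/
def nu {d n m : ℕ} (k : ℕ) (X : Fin n → Pt d) (Y : Fin m → Pt d) (i : Fin n) : ℝ :=
  kNNdist k (List.ofFn Y) (X i)

/-- The k-NN based γ-divergence estimator `D̂_γ(Xⁿ‖Yᵐ)`. -/
def gammaEst (γ : ℝ) (k : ℕ) {d n m : ℕ} (X : Fin n → Pt d) (Y : Fin m → Pt d) : ℝ :=
  (1 / (γ * (1 + γ))) * Real.log (
    (((n : ℝ)⁻¹ * ∑ i, (((n : ℝ) - 1) * rho k X i ^ d) ^ (-γ)) *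
      ((m : ℝ)⁻¹ * ∑ j, (((m : ℝ) - 1) * rho k Y j ^ d) ^ (-γ)) ^ γ) /
    ((n : ℝ)⁻¹ * ∑ i, ((m : ℝ) * nu k X Y i ^ d) ^ (-γ)) ^ (1 + γ))

/-- A function `g ∈ L¹(M)` is uniformly Lebesgue approximable on `M`: for every
sequence `Rₙ → 0` and every `δ > 0` there is `n₀` such that for all `n > n₀` and
almost all `x ∈ M`, the ball-average of `g` on `B(x,Rₙ) ∩ M` is within `δ` of `g x`. -/
def UnifLebApprox {d : ℕ} (M : Set (Pt d)) (g : Pt d → ℝ) : Prop :=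
  IntegrableOn g M ∧
  ∀ R : ℕ → ℝ, Tendsto R atTop (𝓝 0) → ∀ δ > 0, ∃ n₀ : ℕ, ∀ n > n₀,
    ∀ᵐ x ∂(volume.restrict M),
      g x - δ < (∫ t in Metric.closedBall x (R n) ∩ M, g t) /
          (volume (Metric.closedBall x (R n) ∩ M)).toReal ∧
        (∫ t in Metric.closedBall x (R n) ∩ M, g t) /
          (volume (Metric.closedBall x (R n) ∩ M)).toReal < g x + δ

/-- `c̄`: the Lebesgue volume of the `d`-dimensional unit ball. -/
def unitBallVol (d : ℕ) : ℝ := (volume (Metric.ball (0 : Pt d) 1)).toReal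

/-- The digamma function `ψ = Γ'/Γ`. -/
def digamma (z : ℝ) : ℝ := deriv Real.Gamma z / Real.Gamma z

/-- The bound function
`H(x,p,δ,ω) = Σ_{j<k} (1/j!)^ω Γ(κ+jω) ((p(x)+δ)/(p(x)-δ))^{jω} (p(x)-δ)^{-γ} ((1-δ)ω)^{-κ-jω}`. -/
def Hfun {d : ℕ} (k : ℕ) (κ γ : ℝ) (p : Pt d → ℝ) (x : Pt d) (δ ω : ℝ) : ℝ :=
  ∑ j ∈ Finset.range k,
    ((Nat.factorial j : ℝ)⁻¹) ^ ω * Real.Gamma (κ + j * ω) *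
      ((p x + δ) / (p x - δ)) ^ ((j : ℝ) * ω) * (p x - δ) ^ (-γ) *
      ((1 - δ) * ω) ^ (-κ - j * ω)

lemma binom_term_tendsto {m : ℕ → ℕ} (hm : Tendsto m atTop atTop) {q : ℕ → ℝ}
    (hq0 : ∀ n, 0 ≤ q n) {lam : ℝ}
    (hlim : Tendsto (fun n => (m n : ℝ) * q n) atTop (𝓝 lam)) (j : ℕ) :
    Tendsto (fun n => ((m n).choose j : ℝ) * q n ^ j * (1 - q n) ^ (m n - j)) atTop
      (𝓝 (lam ^ j / (j.factorial : ℝ) * Real.exp (-lam))) := by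
  have hmR : Tendsto (fun n => (m n : ℝ)) atTop atTop :=
    tendsto_natCast_atTop_atTop.comp hm
  have hminv : Tendsto (fun n => ((m n : ℝ))⁻¹) atTop (𝓝 0) :=
    tendsto_inv_atTop_zero.comp hmR
  have hq_lim : Tendsto q atTop (𝓝 0) := by
    have h := hlim.mul hminv
    rw [mul_zero] at h
    apply h.congr'
    filter_upwards [hm.eventually_gt_atTop 0] with n hn
    have : (m n : ℝ) ≠ 0 := by positivity
    field_simp
  -- Part A : choose * q^j
  have hA : Tendsto (fun n => ((m n).choose j : ℝ) * q n ^ j) atTop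
      (𝓝 (lam ^ j / (j.factorial : ℝ))) := by
    have hprod : Tendsto (fun n => ∏ i ∈ Finset.range j, ((m n : ℝ) * q n - (i : ℝ) * q n))
        atTop (𝓝 (lam ^ j)) := by
      have : (lam ^ j) = ∏ i ∈ Finset.range j, lam := by rw [Finset.prod_const, Finset.card_range]
      rw [this]
      refine tendsto_finset_prod _ (fun i _ => ?_)
      have h2 : Tendsto (fun n => (i : ℝ) * q n) atTop (𝓝 0) := by
        simpa using hq_lim.const_mul (i : ℝ)
      simpa using hlim.sub h2
    have := hprod.mul_const ((j.factorial : ℝ))⁻¹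
    rw [div_eq_mul_inv]
    apply this.congr'
    filter_upwards [hm.eventually_ge_atTop j] with n hn
    have hdesc : (((m n).descFactorial j : ℕ) : ℝ) = ∏ i ∈ Finset.range j, ((m n : ℝ) - i) := by
      rw [Nat.descFactorial_eq_prod_range, Nat.cast_prod]
      refine Finset.prod_congr rfl (fun i hi => ?_)
      rw [Finset.mem_range] at hi
      rw [Nat.cast_sub (le_trans (Nat.le_of_lt hi) hn)]
    have hchoose : (((m n).choose j : ℕ) : ℝ) = (((m n).descFactorial j : ℕ) : ℝ) / (j.factorial : ℝ) := by
      rw [Nat.descFactorial_eq_factorial_mul_choose, Nat.cast_mul]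
      field_simp
    have hfac : ∀ i ∈ Finset.range j, (m n : ℝ) * q n - (i : ℝ) * q n = ((m n : ℝ) - i) * q n := by
      intro i _; ring
    rw [Finset.prod_congr rfl hfac, Finset.prod_mul_distrib, Finset.prod_const,
      Finset.card_range, ← hdesc, hchoose]
    ring
  -- Part B : (1-q)^(m-j)
  have hB : Tendsto (fun n => (1 - q n) ^ (m n - j)) atTop (𝓝 (Real.exp (-lam))) := by
    have hlog : Tendsto (fun n => ((m n - j : ℕ) : ℝ) * Real.log (1 - q n)) atTop (𝓝 (-lam)) := by
      have hub : Tendsto (fun n => -((m n : ℝ) * q n) + (j : ℝ) * q n) atTop (𝓝 (-lam)) := by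
        have := (hlim.neg).add (hq_lim.const_mul (j : ℝ))
        simpa using this
      have hlb : Tendsto (fun n => (-((m n : ℝ) * q n) + (j : ℝ) * q n) / (1 - q n)) atTop
          (𝓝 (-lam)) := by
        have hden : Tendsto (fun n => 1 - q n) atTop (𝓝 1) := by
          simpa using (tendsto_const_nhds (x := (1:ℝ))).sub hq_lim
        have := hub.div hden one_ne_zero
        rw [div_one] at this
        exact this
      refine tendsto_of_tendsto_of_tendsto_of_le_of_le' hlb hub ?_ ?_
      · filter_upwards [hq_lim.eventually (gt_mem_nhds (by norm_num : (0:ℝ) < 1/2)),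
          hm.eventually_ge_atTop j] with n hq hmn
        have hq2 : q n < 1 := by have := hq0 n; linarith
        have h1q : (0:ℝ) < 1 - q n := by linarith
        have hlog_ge : -(q n) / (1 - q n) ≤ Real.log (1 - q n) := by
          have h := Real.log_le_sub_one_of_pos (x := (1 - q n)⁻¹) (by positivity)
          rw [Real.log_inv] at h
          have he : (1 - q n)⁻¹ - 1 = q n / (1 - q n) := by field_simp; ring
          rw [he] at h
          rw [neg_div]
          linarith
        have hmj : (0:ℝ) ≤ ((m n - j : ℕ) : ℝ) := by positivity
        have hmul := mul_le_mul_of_nonneg_left hlog_ge hmj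
        have hcast : ((m n - j : ℕ) : ℝ) = (m n : ℝ) - j := by
          rw [Nat.cast_sub hmn]
        have heq : ((m n - j : ℕ) : ℝ) * (-(q n) / (1 - q n))
            = (-((m n : ℝ) * q n) + (j : ℝ) * q n) / (1 - q n) := by
          rw [hcast]; field_simp; ring
        linarith
      · filter_upwards [hq_lim.eventually (gt_mem_nhds (by norm_num : (0:ℝ) < 1/2)),
          hm.eventually_ge_atTop j] with n hq hmn
        have hq2 : q n < 1 := by have := hq0 n; linarith
        have h1q : (0:ℝ) < 1 - q n := by linarith
        have hlog_le : Real.log (1 - q n) ≤ -(q n) := by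
          have h := Real.log_le_sub_one_of_pos h1q
          linarith
        have hmj : (0:ℝ) ≤ ((m n - j : ℕ) : ℝ) := by positivity
        have hmul := mul_le_mul_of_nonneg_left hlog_le hmj
        have hcast : ((m n - j : ℕ) : ℝ) = (m n : ℝ) - j := by
          rw [Nat.cast_sub hmn]
        have heq : ((m n - j : ℕ) : ℝ) * (-(q n))
            = -((m n : ℝ) * q n) + (j : ℝ) * q n := by
          rw [hcast]; ring
        linarith
    have hexp : Tendsto (fun n => Real.exp (((m n - j : ℕ) : ℝ) * Real.log (1 - q n))) atTop
        (𝓝 (Real.exp (-lam))) := (Real.continuous_exp.tendsto _).comp hlog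
    apply hexp.congr'
    filter_upwards [hq_lim.eventually (gt_mem_nhds (by norm_num : (0:ℝ) < 1/2))] with n hq
    have hq2 : q n < 1 := by have := hq0 n; linarith
    have h1q : (0:ℝ) < 1 - q n := by linarith
    rw [Real.exp_nat_mul, Real.exp_log h1q]
  simpa using hA.mul hB

open scoped Classical in
lemma sorted_getD_lt_iff : ∀ (s : List ℝ), s.Pairwise (· ≤ ·) → ∀ k : ℕ, k < s.length → ∀ r : ℝ,
    (s.getD k 0 < r ↔ k + 1 ≤ s.countP (fun a => decide (a < r)))
  | [], _, k, hk, r => by simp at hk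
  | a :: t, hs, k, hk, r => by
    rw [List.pairwise_cons] at hs
    cases k with
    | zero =>
      simp only [List.getD_cons_zero, List.countP_cons]
      constructor
      · intro h
        have : decide (a < r) = true := by simpa using h
        simp [this]
      · intro h
        by_contra har
        push_neg at har
        have h0 : t.countP (fun a => decide (a < r)) = 0 := by
          rw [List.countP_eq_zero]
          intro b hb
          simpa using not_lt.2 (har.trans (hs.1 b hb))
        simp [h0, not_lt.2 har] at h
    | succ k =>
      simp only [List.getD_cons_succ, List.countP_cons]
      have hk' : k < t.length := by simpa using hk
      by_cases har : a < r
      · rw [sorted_getD_lt_iff t hs.2 k hk' r]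
        simp [har]
      · have h0 : t.countP (fun a => decide (a < r)) = 0 := by
          rw [List.countP_eq_zero]
          intro b hb
          simpa using not_lt.2 ((not_lt.1 har).trans (hs.1 b hb))
        have hnl : ¬ t.getD k 0 < r := by
          have hm : t.getD k 0 ∈ t := by
            rw [List.getD_eq_getElem _ _ hk']; exact List.getElem_mem hk'
          exact not_lt.2 ((not_lt.1 har).trans (hs.1 _ hm))
        constructor
        · intro h; exact absurd h hnl
        · intro h; simp [h0, har] at h

lemma countP_ofFn {α : Type*} : ∀ (m : ℕ) (g : Fin m → α) (q : α → Bool),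
    (List.ofFn g).countP q = (Finset.univ.filter (fun i => q (g i))).card
  | 0, g, q => by simp
  | (m+1), g, q => by
    rw [List.ofFn_succ, List.countP_cons, countP_ofFn m _ q,
      Finset.card_filter, Finset.card_filter, Fin.sum_univ_succ]
    by_cases h : q (g 0) <;> simp [h, add_comm]

lemma kNNdist_lt_iff {d : ℕ} (k : ℕ) (hk : 0 < k) {m : ℕ} (hm : k ≤ m) (ω : Fin m → Pt d)
    (z : Pt d) (r : ℝ) :
    kNNdist k (List.ofFn ω) z < r ↔
      k ≤ (Finset.univ.filter (fun i => dist z (ω i) < r)).card := by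
  unfold kNNdist
  have hperm := List.perm_insertionSort (· ≤ ·) ((List.ofFn ω).map (dist z))
  have hsorted := List.pairwise_insertionSort (· ≤ ·) ((List.ofFn ω).map (dist z))
  have hlen : (List.insertionSort (· ≤ ·) ((List.ofFn ω).map (dist z))).length = m := by
    rw [hperm.length_eq, List.length_map, List.length_ofFn]
  rw [sorted_getD_lt_iff _ hsorted (k-1) (by omega) r, hperm.countP_eq,
    List.map_ofFn, countP_ofFn]
  simp only [Function.comp, decide_eq_true_eq]
  omega

open scoped Classical

lemma pi_count_eq {α : Type*} [MeasurableSpace α] (μ : Measure α) [IsProbabilityMeasure μ]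
    (m : ℕ) {B : Set α} (hB : MeasurableSet B) (j : ℕ) :
    Measure.pi (fun _ : Fin m => μ)
      {ω : Fin m → α | (Finset.univ.filter (fun i => ω i ∈ B)).card = j} =
      (m.choose j : ℕ) * μ B ^ j * μ Bᶜ ^ (m - j) := by
  set A : Finset (Fin m) → Set (Fin m → α) :=
    fun s => Set.univ.pi (fun i => if i ∈ s then B else Bᶜ) with hA
  have hmemA : ∀ s (ω : Fin m → α), ω ∈ A s ↔ ∀ i, ω i ∈ (if i ∈ s then B else Bᶜ) := by
    intro s ω; simp [hA, Set.mem_pi]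
  have hunion : {ω : Fin m → α | (Finset.univ.filter (fun i => ω i ∈ B)).card = j} =
      ⋃ s ∈ Finset.powersetCard j (Finset.univ : Finset (Fin m)), A s := by
    ext ω
    simp only [Set.mem_setOf_eq, Set.mem_iUnion, Finset.mem_powersetCard_univ]
    constructor
    · intro h
      refine ⟨Finset.univ.filter (fun i => ω i ∈ B), h, ?_⟩
      rw [hmemA]
      intro i
      by_cases hi : ω i ∈ B <;> simp [hi]
    · rintro ⟨s, hs, hωs⟩
      rw [hmemA] at hωs
      have : Finset.univ.filter (fun i => ω i ∈ B) = s := by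
        ext i
        simp only [Finset.mem_filter, Finset.mem_univ, true_and]
        constructor
        · intro hi
          by_contra his
          have := hωs i; rw [if_neg his] at this; exact this hi
        · intro his
          have := hωs i; rwa [if_pos his] at this
      rw [this]; exact hs
  have hmeasA : ∀ s : Finset (Fin m), MeasurableSet (A s) := by
    intro s
    apply MeasurableSet.univ_pi
    intro i
    by_cases hi : i ∈ s <;> simp [hi, hB, hB.compl]
  have hdisj : (↑(Finset.powersetCard j (Finset.univ : Finset (Fin m))) :
      Set (Finset (Fin m))).PairwiseDisjoint A := by
    intro s _ t _ hst
    rw [Function.onFun, Set.disjoint_left]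
    intro ω hωs hωt
    apply hst
    ext i
    have h1 := (hmemA s ω).1 hωs i
    have h2 := (hmemA t ω).1 hωt i
    constructor
    · intro hi
      rw [if_pos hi] at h1
      by_contra hit
      rw [if_neg hit] at h2; exact h2 h1
    · intro hi
      rw [if_pos hi] at h2
      by_contra hit
      rw [if_neg hit] at h1; exact h1 h2
  rw [hunion, measure_biUnion_finset hdisj (fun s _ => hmeasA s)]
  have hterm : ∀ s ∈ Finset.powersetCard j (Finset.univ : Finset (Fin m)),
      Measure.pi (fun _ : Fin m => μ) (A s) = μ B ^ j * μ Bᶜ ^ (m - j) := by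
    intro s hs
    rw [Finset.mem_powersetCard_univ] at hs
    rw [hA]
    rw [Measure.pi_pi]
    have hμite : ∀ i : Fin m, μ (if i ∈ s then B else Bᶜ) = if i ∈ s then μ B else μ Bᶜ := by
      intro i; by_cases hi : i ∈ s <;> simp [hi]
    simp_rw [hμite]
    rw [← Finset.prod_filter_mul_prod_filter_not Finset.univ (· ∈ s)]
    have e1 : Finset.univ.filter (fun i : Fin m => i ∈ s) = s := Finset.filter_univ_mem s
    have e2 : Finset.univ.filter (fun i : Fin m => ¬ i ∈ s) = sᶜ := by ext i; simp
    rw [e1, e2, Finset.prod_congr rfl (fun i hi => if_pos hi),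
      Finset.prod_congr rfl (fun i (hi : i ∈ sᶜ) => if_neg (Finset.mem_compl.1 hi)),
      Finset.prod_const, Finset.prod_const, hs, Finset.card_compl, hs, Fintype.card_fin]
  rw [Finset.sum_congr rfl hterm, Finset.sum_const, Finset.card_powersetCard,
    Finset.card_univ, Fintype.card_fin, nsmul_eq_mul, mul_assoc]

lemma measurable_countmem {α : Type*} [MeasurableSpace α] (m : ℕ) {B : Set α}
    (hB : MeasurableSet B) :
    Measurable (fun ω : Fin m → α => (Finset.univ.filter (fun i => ω i ∈ B)).card) := by
  have h : (fun ω : Fin m → α => (Finset.univ.filter (fun i => ω i ∈ B)).card)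
      = fun ω => ∑ i, if ω i ∈ B then 1 else 0 := by
    funext ω; rw [Finset.card_filter]
  rw [h]
  refine Finset.measurable_sum _ (fun i _ => ?_)
  exact Measurable.ite (measurable_pi_apply i hB) measurable_const measurable_const

lemma pi_count_ge_toReal {α : Type*} [MeasurableSpace α] (μ : Measure α)
    [IsProbabilityMeasure μ] (m k : ℕ) {B : Set α} (hB : MeasurableSet B) :
    (Measure.pi (fun _ : Fin m => μ)
      {ω : Fin m → α | k ≤ (Finset.univ.filter (fun i => ω i ∈ B)).card}).toReal =
    1 - ∑ j ∈ Finset.range k,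
      (m.choose j : ℝ) * (μ B).toReal ^ j * (1 - (μ B).toReal) ^ (m - j) := by
  set P := Measure.pi (fun _ : Fin m => μ) with hP
  haveI : IsProbabilityMeasure P := by rw [hP]; infer_instance
  have hc := measurable_countmem m hB
  set c : (Fin m → α) → ℕ := fun ω => (Finset.univ.filter (fun i => ω i ∈ B)).card with hcdef
  have hEc : {ω : Fin m → α | k ≤ c ω}ᶜ = ⋃ j ∈ Finset.range k, {ω | c ω = j} := by
    ext ω
    simp only [Set.mem_compl_iff, Set.mem_setOf_eq, Set.mem_iUnion, Finset.mem_range]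
    constructor
    · intro h; exact ⟨c ω, by omega, rfl⟩
    · rintro ⟨j, hj, hcj⟩; omega
  have hCj : ∀ j : ℕ, MeasurableSet {ω : Fin m → α | c ω = j} :=
    fun j => hc (measurableSet_singleton j)
  have hE : MeasurableSet {ω : Fin m → α | k ≤ c ω} :=
    hc (measurableSet_Ici)
  have hcompl : P {ω : Fin m → α | k ≤ c ω} = 1 - P ({ω : Fin m → α | k ≤ c ω}ᶜ) := by
    rw [← compl_compl {ω : Fin m → α | k ≤ c ω}] at hE ⊢
    rw [prob_compl_eq_one_sub hE.of_compl]
    · rw [compl_compl]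
  have hsum : P ({ω : Fin m → α | k ≤ c ω}ᶜ) = ∑ j ∈ Finset.range k, P {ω | c ω = j} := by
    rw [hEc]
    refine measure_biUnion_finset ?_ (fun j _ => hCj j)
    intro i _ j _ hij
    rw [Function.onFun, Set.disjoint_left]
    intro ω h1 h2
    exact hij (by rw [← h1, ← h2])
  have hCval : ∀ j, P {ω : Fin m → α | c ω = j} =
      (m.choose j : ℕ) * μ B ^ j * μ Bᶜ ^ (m - j) := fun j => pi_count_eq μ m hB j
  have hle1 : P ({ω : Fin m → α | k ≤ c ω}ᶜ) ≤ 1 := prob_le_one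
  have hterm_ne : ∀ j ∈ Finset.range k, P {ω : Fin m → α | c ω = j} ≠ ⊤ :=
    fun j _ => measure_ne_top _ _
  rw [hcompl, ENNReal.toReal_sub_of_le hle1 ENNReal.one_ne_top, ENNReal.toReal_one, hsum,
    ENNReal.toReal_sum hterm_ne]
  congr 1
  refine Finset.sum_congr rfl (fun j _ => ?_)
  rw [hCval j, ENNReal.toReal_mul, ENNReal.toReal_mul, ENNReal.toReal_pow, ENNReal.toReal_pow,
    ENNReal.toReal_natCast, prob_compl_eq_one_sub hB,
    ENNReal.toReal_sub_of_le prob_le_one ENNReal.one_ne_top, ENNReal.toReal_one]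

lemma nontrivial_pt {d : ℕ} (hd : 0 < d) : Nontrivial (Pt d) := by
  refine ⟨EuclideanSpace.single ⟨0, hd⟩ (1:ℝ), 0, fun h => ?_⟩
  have := congrArg (fun v : Pt d => v ⟨0, hd⟩) h
  simp [EuclideanSpace.single_apply] at this
/-- Weak convergence of the conditional log-k-NN-distance CDF to the log-Erlang CDF:
if `p` is uniformly Lebesgue approximable on its support `M` (with a.e. point of `M`
interior in the sense that small balls are contained in `M`), then for a.e. `x ∈ M`,
`F_{n,k,x}(u) → 1 - exp(-λ(x)eᵘ) Σ_{j<k} (λ(x)eᵘ)ʲ/j!` with `λ(x) = c̄ p(x)`. -/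
theorem stmt9 {d : ℕ} (hd : 0 < d) (k : ℕ) (hk : 0 < k)
    (M : Set (Pt d)) (p : Pt d → ℝ) (hp0 : ∀ x, 0 ≤ p x) (hp1 : ∫ x, p x = 1)
    (hsupp : Function.support p ⊆ M) (hULA : UnifLebApprox M p)
    (hint : ∀ᵐ x ∂(volume.restrict M), ∃ r > 0, Metric.closedBall x r ⊆ M)
    (u : ℝ) :
    ∀ᵐ x ∂(volume.restrict M),
      Tendsto (fun n : ℕ =>
          ((Measure.pi fun _ : Fin (n - 1) =>
              volume.withDensity fun t => ENNReal.ofReal (p t))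
            {ω : Fin (n - 1) → Pt d |
              Real.log (((n : ℝ) - 1) * kNNdist k (List.ofFn ω) x ^ d) < u}).toReal)
        atTop
        (𝓝 (1 - Real.exp (-(unitBallVol d * p x) * Real.exp u) *
            ∑ j ∈ Finset.range k,
              (unitBallVol d * p x * Real.exp u) ^ j / (Nat.factorial j : ℝ))) := by
  haveI : Nontrivial (Pt d) := nontrivial_pt hd
  have hd0 : (d:ℝ) ≠ 0 := Nat.cast_ne_zero.2 hd.ne'
  have hpint : Integrable p := by
    by_contra h
    rw [integral_undef h] at hp1; norm_num at hp1
  set μ : Measure (Pt d) := volume.withDensity (fun t => ENNReal.ofReal (p t)) with hμ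
  haveI hprob : IsProbabilityMeasure μ := by
    constructor
    rw [hμ, withDensity_apply _ MeasurableSet.univ, Measure.restrict_univ,
      ← MeasureTheory.ofReal_integral_eq_lintegral_ofReal hpint
        (Filter.Eventually.of_forall hp0), hp1, ENNReal.ofReal_one]
  haveI : NoAtoms μ := by
    constructor
    intro y
    rw [hμ]
    exact (withDensity_absolutelyContinuous volume _) (measure_singleton y)
  -- the radius sequence
  set R : ℕ → ℝ := fun n =>
    if n ≤ 1 then 0 else (Real.exp u / ((n:ℝ) - 1)) ^ ((1:ℝ)/(d:ℝ)) with hRdef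
  have hbase_pos : ∀ n : ℕ, 2 ≤ n → 0 < Real.exp u / ((n:ℝ) - 1) := by
    intro n hn
    have : (1:ℝ) ≤ (n:ℝ) - 1 := by
      have : (2:ℝ) ≤ (n:ℝ) := by exact_mod_cast hn
      linarith
    positivity
  have hRpos : ∀ n : ℕ, 2 ≤ n → 0 < R n := by
    intro n hn
    rw [hRdef]
    simp only
    rw [if_neg (by omega)]
    exact Real.rpow_pos_of_pos (hbase_pos n hn) _
  have hRd : ∀ n : ℕ, 2 ≤ n → R n ^ d = Real.exp u / ((n:ℝ) - 1) := by
    intro n hn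
    rw [hRdef]
    simp only
    rw [if_neg (by omega), ← Real.rpow_natCast ((Real.exp u / ((n:ℝ)-1)) ^ ((1:ℝ)/(d:ℝ))) d,
      ← Real.rpow_mul (hbase_pos n hn).le, one_div, inv_mul_cancel₀ hd0, Real.rpow_one]
  have hR0 : Tendsto R atTop (𝓝 0) := by
    have hden : Tendsto (fun n : ℕ => (n:ℝ) - 1) atTop atTop :=
      tendsto_atTop_add_const_right atTop (-1) tendsto_natCast_atTop_atTop
    have hbase : Tendsto (fun n : ℕ => Real.exp u / ((n:ℝ) - 1)) atTop (𝓝 0) :=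
      Tendsto.div_atTop tendsto_const_nhds hden
    have hcont : ContinuousAt (fun x : ℝ => x ^ ((1:ℝ)/(d:ℝ))) 0 := by
      apply Real.continuousAt_rpow_const
      right
      positivity
    have := (hcont.tendsto.comp hbase)
    rw [Real.zero_rpow (by positivity)] at this
    apply this.congr'
    filter_upwards [Filter.eventually_ge_atTop 2] with n hn
    rw [hRdef]
    simp only [Function.comp]
    rw [if_neg (by omega)]
  -- a.e. convergence of ball averages
  have havg : ∀ᵐ x ∂(volume.restrict M), Tendsto (fun n =>
      (∫ t in Metric.closedBall x (R n) ∩ M, p t) /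
        (volume (Metric.closedBall x (R n) ∩ M)).toReal) atTop (𝓝 (p x)) := by
    have key : ∀ i : ℕ, ∃ n₀ : ℕ, ∀ n > n₀, ∀ᵐ x ∂(volume.restrict M),
        |(∫ t in Metric.closedBall x (R n) ∩ M, p t) /
          (volume (Metric.closedBall x (R n) ∩ M)).toReal - p x| < 1/((i:ℝ)+1) := by
      intro i
      obtain ⟨n₀, h⟩ := hULA.2 R hR0 (1/((i:ℝ)+1)) (by positivity)
      refine ⟨n₀, fun n hn => (h n hn).mono (fun x hx => ?_)⟩
      rw [abs_sub_lt_iff]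
      constructor <;> linarith [hx.1, hx.2]
    choose n₀ hn₀ using key
    have hae : ∀ᵐ x ∂(volume.restrict M), ∀ i n, n > n₀ i →
        |(∫ t in Metric.closedBall x (R n) ∩ M, p t) /
          (volume (Metric.closedBall x (R n) ∩ M)).toReal - p x| < 1/((i:ℝ)+1) := by
      rw [ae_all_iff]
      intro i
      rw [ae_all_iff]
      intro n
      by_cases hn : n > n₀ i
      · exact (hn₀ i n hn).mono (fun x hx _ => hx)
      · exact Filter.Eventually.of_forall (fun x h => absurd h hn)
    filter_upwards [hae] with x hx
    rw [Metric.tendsto_atTop]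
    intro ε hε
    obtain ⟨i, hi⟩ := exists_nat_one_div_lt hε
    refine ⟨n₀ i + 1, fun n hn => ?_⟩
    rw [Real.dist_eq]
    exact lt_trans (hx i n (by omega)) (by exact_mod_cast hi)
  filter_upwards [havg, hint] with x hx_avg hx_ball
  obtain ⟨r₀, hr₀pos, hr₀⟩ := hx_ball
  -- the ball-measure sequence
  set q : ℕ → ℝ := fun n => (μ (Metric.ball x (R n))).toReal with hqdef
  have hq0 : ∀ n, 0 ≤ q n := fun n => ENNReal.toReal_nonneg
  set lam : ℝ := unitBallVol d * p x * Real.exp u with hlam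
  have hcbar_pos : 0 < unitBallVol d :=
    ENNReal.toReal_pos (Metric.measure_ball_pos volume 0 one_pos).ne' measure_ball_lt_top.ne
  -- key limit : m * q n → lam
  have hqlim : Tendsto (fun n : ℕ => ((n - 1 : ℕ) : ℝ) * q n) atTop (𝓝 lam) := by
    have h := hx_avg.mul_const (unitBallVol d * Real.exp u)
    have heqlim : p x * (unitBallVol d * Real.exp u) = lam := by rw [hlam]; ring
    rw [heqlim] at h
    apply h.congr'
    filter_upwards [Filter.eventually_ge_atTop 2,
      hR0.eventually (gt_mem_nhds hr₀pos)] with n hn2 hRr₀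
    have hRn : 0 < R n := hRpos n hn2
    have hsub : Metric.closedBall x (R n) ⊆ M :=
      subset_trans (Metric.closedBall_subset_closedBall hRr₀.le) hr₀
    have hinter : Metric.closedBall x (R n) ∩ M = Metric.closedBall x (R n) :=
      Set.inter_eq_left.2 hsub
    have hball_ae : Metric.ball x (R n) =ᵐ[volume] Metric.closedBall x (R n) := by
      rw [MeasureTheory.ae_eq_set]
      constructor
      · rw [Set.diff_eq_empty.2 Metric.ball_subset_closedBall]
        exact measure_empty
      · rw [Metric.closedBall_diff_ball]
        exact Measure.addHaar_sphere volume x (R n)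
    have hq_int : q n = ∫ t in Metric.closedBall x (R n), p t := by
      rw [hqdef]
      simp only
      rw [hμ, withDensity_apply _ measurableSet_ball,
        ← MeasureTheory.ofReal_integral_eq_lintegral_ofReal
          (hpint.restrict) (Filter.Eventually.of_forall hp0),
        ENNReal.toReal_ofReal (integral_nonneg (fun t => hp0 t))]
      exact setIntegral_congr_set hball_ae
    have hV : (volume (Metric.closedBall x (R n))).toReal = R n ^ d * unitBallVol d := by
      rw [Measure.addHaar_closedBall volume x hRn.le, finrank_euclideanSpace_fin,
        ENNReal.toReal_mul, ENNReal.toReal_ofReal (by positivity)]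
      rfl
    have hVpos : 0 < (volume (Metric.closedBall x (R n))).toReal :=
      ENNReal.toReal_pos (Metric.measure_closedBall_pos volume x hRn).ne'
        measure_closedBall_lt_top.ne
    have hn1R : ((n - 1 : ℕ) : ℝ) = (n:ℝ) - 1 := by
      have : 1 ≤ n := by omega
      push_cast [this]
      ring
    have hnpos : (0:ℝ) < (n:ℝ) - 1 := by
      have : (2:ℝ) ≤ (n:ℝ) := by exact_mod_cast hn2
      linarith
    rw [hinter, hq_int, hV, hn1R, hRd n hn2]
    have hexp_ne : Real.exp u ≠ 0 := (Real.exp_pos u).ne'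
    field_simp
  -- the binomial formula and Poisson limit
  have hm : Tendsto (fun n : ℕ => n - 1) atTop atTop := tendsto_sub_atTop_nat 1
  have hterm : ∀ j : ℕ, Tendsto (fun n : ℕ =>
      (((n-1).choose j : ℕ) : ℝ) * q n ^ j * (1 - q n) ^ (n - 1 - j)) atTop
      (𝓝 (lam ^ j / (j.factorial : ℝ) * Real.exp (-lam))) :=
    fun j => binom_term_tendsto hm hq0 hqlim j
  have hG : Tendsto (fun n : ℕ => 1 - ∑ j ∈ Finset.range k,
      (((n-1).choose j : ℕ) : ℝ) * q n ^ j * (1 - q n) ^ (n - 1 - j)) atTop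
      (𝓝 (1 - ∑ j ∈ Finset.range k, lam ^ j / (j.factorial : ℝ) * Real.exp (-lam))) :=
    Tendsto.const_sub 1 (tendsto_finset_sum _ (fun j _ => hterm j))
  have hLeq : 1 - Real.exp (-(unitBallVol d * p x) * Real.exp u) *
      ∑ j ∈ Finset.range k, (unitBallVol d * p x * Real.exp u) ^ j / (Nat.factorial j : ℝ)
      = 1 - ∑ j ∈ Finset.range k, lam ^ j / (j.factorial : ℝ) * Real.exp (-lam) := by
    rw [Finset.mul_sum]
    congr 1
    refine Finset.sum_congr rfl (fun j _ => ?_)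
    rw [hlam, show -(unitBallVol d * p x) * Real.exp u
      = -(unitBallVol d * p x * Real.exp u) by ring]
    ring
  rw [hLeq]
  apply hG.congr'
  filter_upwards [Filter.eventually_ge_atTop (max 2 (k+1))] with n hn
  have hn2 : 2 ≤ n := le_trans (le_max_left _ _) hn
  have hnk : k + 1 ≤ n := le_trans (le_max_right _ _) hn
  have hkm : k ≤ n - 1 := by omega
  set m := n - 1 with hmdef
  set P := Measure.pi (fun _ : Fin m => μ) with hPdef
  have hRn : 0 < R n := hRpos n hn2
  have hnpos : (0:ℝ) < (n:ℝ) - 1 := by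
    have : (2:ℝ) ≤ (n:ℝ) := by exact_mod_cast hn2
    linarith
  -- the null set of sample points hitting x
  have hN : P (⋃ i : Fin m, {ω : Fin m → Pt d | ω i = x}) = 0 :=
    measure_iUnion_null (fun i => Measure.pi_hyperplane (fun _ => μ) i x)
  have hae_nmem : ∀ᵐ ω ∂P, ω ∉ ⋃ i : Fin m, {ω : Fin m → Pt d | ω i = x} :=
    measure_eq_zero_iff_ae_notMem.1 hN
  have hevent : {ω : Fin m → Pt d |
        Real.log (((n : ℝ) - 1) * kNNdist k (List.ofFn ω) x ^ d) < u}
      =ᵐ[P] {ω : Fin m → Pt d |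
        k ≤ (Finset.univ.filter (fun i => ω i ∈ Metric.ball x (R n))).card} := by
    rw [Filter.eventuallyEq_set]
    filter_upwards [hae_nmem] with ω hω
    simp only [Set.mem_iUnion, Set.mem_setOf_eq, not_exists] at hω
    -- kNNdist is positive
    have hρpos : 0 < kNNdist k (List.ofFn ω) x := by
      unfold kNNdist
      have hperm := List.perm_insertionSort (· ≤ ·) ((List.ofFn ω).map (dist x))
      have hlen : (List.insertionSort (· ≤ ·) ((List.ofFn ω).map (dist x))).length = m := by
        rw [hperm.length_eq, List.length_map, List.length_ofFn]
      have hmem : (List.insertionSort (· ≤ ·) ((List.ofFn ω).map (dist x))).getD (k-1) 0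
          ∈ List.insertionSort (· ≤ ·) ((List.ofFn ω).map (dist x)) := by
        rw [List.getD_eq_getElem _ _ (by omega : k - 1 < (List.insertionSort (· ≤ ·) ((List.ofFn ω).map (dist x))).length)]
        exact List.getElem_mem _
      have hmem2 := hperm.mem_iff.1 hmem
      rw [List.mem_map] at hmem2
      obtain ⟨a, ha, hval⟩ := hmem2
      rw [List.mem_ofFn] at ha
      obtain ⟨i, rfl⟩ := ha
      rw [← hval]
      exact dist_pos.2 (fun hc => hω i hc.symm)
    set ρ := kNNdist k (List.ofFn ω) x with hρ
    have hlhs : Real.log (((n : ℝ) - 1) * ρ ^ d) < u ↔ ρ < R n := by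
      rw [Real.log_lt_iff_lt_exp (by positivity)]
      constructor
      · intro h
        have h2 : ρ ^ d < Real.exp u / ((n:ℝ) - 1) := by
          rw [lt_div_iff₀ hnpos, mul_comm]
          exact h
        rw [← hRd n hn2] at h2
        exact lt_of_pow_lt_pow_left₀ d hRn.le h2
      · intro h
        have h2 : ρ ^ d < R n ^ d :=
          pow_lt_pow_left₀ h hρpos.le hd.ne'
        rw [hRd n hn2, lt_div_iff₀ hnpos, mul_comm] at h2
        exact h2
    rw [hlhs, kNNdist_lt_iff k hk hkm ω x (R n)]
    have : ∀ i : Fin m, (dist x (ω i) < R n) ↔ ω i ∈ Metric.ball x (R n) := by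
      intro i
      rw [Metric.mem_ball, dist_comm]
    constructor
    · intro h
      refine le_trans h (Finset.card_le_card ?_)
      intro i hi
      rw [Finset.mem_filter] at hi ⊢
      exact ⟨hi.1, (this i).1 hi.2⟩
    · intro h
      refine le_trans h (Finset.card_le_card ?_)
      intro i hi
      rw [Finset.mem_filter] at hi ⊢
      exact ⟨hi.1, (this i).2 hi.2⟩
  rw [measure_congr hevent, pi_count_ge_toReal μ m k measurableSet_ball]
end
end

section
/- Let Y_1,…,Y_m be i.i.d. with density q supported on M′ ⊆ ℝ^d. Suppose q is bounded away from zero and uniformly Lebesgue approximable, and there exists δ₀ > 0 such that for all δ ∈ (0, δ₀), ∫_{M′} H(y,q,δ,1) q(y) dy < ∞. Let γ < k, and let k(m) be a sequence with k(m) → ∞ and m/k(m) → ∞ as m → ∞. Define the k-NN density estimator q̂_k(y) := k / ((m−1) c̄ ρ̄_k(y)^d), where ρ̄_k(y) is the k-NN distance of y among the sample and c̄ is the volume of the d-dimensional unit ball. Then for almost all y in the support of q, q̂_{k(m)}(y)^γ → q(y)^γ in probability as m → ∞. -/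
open MeasureTheory Filter Topology
open scoped ENNReal

noncomputable section

section AuxiliaryLemmas


lemma sorted_getD_le_iff : ∀ (S : List ℝ), S.Pairwise (· ≤ ·) → ∀ (i : ℕ), i < S.length → ∀ (r : ℝ),
    (S.getD i 0 ≤ r ↔ i + 1 ≤ S.countP (fun a => decide (a ≤ r)))
  | [], _, i, hi, r => by simp at hi
  | a :: T, hS, 0, hi, r => by
    rw [List.pairwise_cons] at hS
    simp only [List.getD_cons_zero, List.countP_cons]
    constructor
    · intro h
      simp [h]
    · intro h
      by_cases har : a ≤ r
      · exact har
      · simp only [har, decide_eq_true_eq, if_false] at h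
        obtain ⟨x, hx, hxr⟩ := List.countP_pos_iff.mp (lt_of_lt_of_le Nat.zero_lt_one h)
        exact (hS.1 x hx).trans (of_decide_eq_true hxr)
  | a :: T, hS, (i+1), hi, r => by
    rw [List.pairwise_cons] at hS
    simp only [List.length_cons, Nat.add_lt_add_iff_right] at hi
    have IH := sorted_getD_le_iff T hS.2 i hi r
    simp only [List.getD_cons_succ, List.countP_cons]
    constructor
    · intro h
      have h1 := IH.mp h
      have hmem : T.getD i 0 ∈ T := by
        rw [List.getD_eq_getElem _ _ hi]; exact List.getElem_mem _
      have har : a ≤ r := (hS.1 _ hmem).trans h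
      simp only [har, decide_eq_true_eq, if_true]
      omega
    · intro h
      apply IH.mpr
      have : (if (decide (a ≤ r)) = true then 1 else 0) ≤ 1 := by split <;> omega
      omega

lemma countP_ofFn_s14 {β : Type*} : ∀ {n : ℕ} (ω : Fin n → β) (p : β → Bool),
    (List.ofFn ω).countP p = ∑ j, if p (ω j) then 1 else 0
  | 0, ω, p => by simp
  | (n+1), ω, p => by
    rw [List.ofFn_succ, List.countP_cons, Fin.sum_univ_succ, countP_ofFn_s14]
    omega

lemma kNN_le_iff_count {d n : ℕ} (y : Pt d) (ω : Fin n → Pt d) (k : ℕ) (hk1 : 1 ≤ k)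
    (hkn : k ≤ n) (r : ℝ) :
    kNNdist k (List.ofFn ω) y ≤ r ↔
      (k : ℝ) ≤ ∑ j, (Metric.closedBall y r).indicator (fun _ => (1:ℝ)) (ω j) := by
  unfold kNNdist
  set L := (List.ofFn ω).map (dist y) with hL
  have hsorted : (List.insertionSort (· ≤ ·) L).Pairwise (· ≤ ·) := List.pairwise_insertionSort _ _
  have hlen : (List.insertionSort (· ≤ ·) L).length = n := by
    rw [(List.perm_insertionSort _ _).length_eq, List.length_map, List.length_ofFn]
  have hi : k - 1 < (List.insertionSort (· ≤ ·) L).length := by omega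
  rw [sorted_getD_le_iff _ hsorted _ hi r]
  have hk1' : k - 1 + 1 = k := by omega
  rw [hk1', (List.perm_insertionSort (· ≤ ·) L).countP_eq, hL, List.countP_map,
    countP_ofFn_s14]
  have hcast : ((∑ j, if (fun a => decide (a ≤ r)) ((dist y ∘ ω) j) = true then 1 else 0 : ℕ) : ℝ)
      = ∑ j, (Metric.closedBall y r).indicator (fun _ => (1:ℝ)) (ω j) := by
    push_cast
    refine Finset.sum_congr rfl fun j _ => ?_
    by_cases h : dist y (ω j) ≤ r
    · simp [h, Set.indicator_of_mem, Metric.mem_closedBall, dist_comm]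
    · have h' : ω j ∉ Metric.closedBall y r := by
        simp [Metric.mem_closedBall, dist_comm]; linarith
      simp [h, Set.indicator_of_notMem h']
  rw [← hcast]
  exact_mod_cast Nat.cast_le.symm

lemma cheb_count {α : Type*} [MeasurableSpace α] (ν : Measure α) [IsProbabilityMeasure ν]
    (s : Set α) (hs : MeasurableSet s) (n : ℕ) {t : ℝ} (ht : 0 < t) :
    Measure.pi (fun _ : Fin n => ν)
      {ω | t ≤ |(∑ j, s.indicator (fun _ => (1:ℝ)) (ω j)) - n * (ν s).toReal|}
      ≤ ENNReal.ofReal (n * (ν s).toReal / t ^ 2) := by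
  letI : MeasureSpace α := ⟨ν⟩
  set p : ℝ := (ν s).toReal with hp
  set ind : α → ℝ := s.indicator (fun _ => (1:ℝ)) with hind
  have hp0 : 0 ≤ p := ENNReal.toReal_nonneg
  have hp1 : p ≤ 1 := by
    have h := prob_le_one (μ := ν) (s := s)
    simpa [hp] using ENNReal.toReal_mono ENNReal.one_ne_top h
  have hind_meas : Measurable ind := measurable_const.indicator hs
  have hind01 : ∀ a, 0 ≤ ind a ∧ ind a ≤ 1 := by
    intro a; by_cases h : a ∈ s <;> simp [hind, Set.indicator_of_mem, Set.indicator_of_notMem, h]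
  have hind_sq : ∀ a, ind a * ind a = ind a := by
    intro a; by_cases h : a ∈ s <;> simp [hind, Set.indicator_of_mem, Set.indicator_of_notMem, h]
  have hind_int : Integrable ind ν := by
    refine (integrable_const (1:ℝ)).mono' hind_meas.aestronglyMeasurable ?_
    filter_upwards with a
    rw [Real.norm_eq_abs, abs_of_nonneg (hind01 a).1]; exact (hind01 a).2
  have hEind : ∫ a, ind a ∂ν = p := integral_indicator_one hs
  set π : Measure (Fin n → α) := Measure.pi (fun _ : Fin n => ν) with hπdef
  haveI : IsProbabilityMeasure π := by rw [hπdef]; infer_instance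
  have hπvol : π = (volume : Measure (Fin n → α)) := by
    rw [hπdef, MeasureTheory.volume_pi]; rfl
  -- the key product integral
  have key : ∀ i j : Fin n, ∫ ω, ind (ω i) * ind (ω j) ∂π = if i = j then p else p * p := by
    intro i j
    classical
    have h1 : ∀ ω : Fin n → α, ind (ω i) * ind (ω j)
        = ∏ l, (if l ∈ ({i, j} : Finset (Fin n)) then ind (ω l) else 1) := by
      intro ω
      rw [Finset.prod_ite_mem Finset.univ ({i,j} : Finset (Fin n)) (fun l => ind (ω l)),
        Finset.univ_inter]
      by_cases hij : i = j
      · subst hij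
        rw [Finset.pair_eq_singleton, Finset.prod_singleton, hind_sq]
      · rw [Finset.prod_pair hij]
    simp_rw [h1]
    rw [hπvol]
    rw [MeasureTheory.integral_fintype_prod_volume_eq_prod (ι := Fin n)
      (f := fun l a => if l ∈ ({i,j} : Finset (Fin n)) then ind a else 1)]
    have h2 : ∀ l : Fin n, (∫ a, (if l ∈ ({i,j} : Finset (Fin n)) then ind a else 1) : ℝ)
        = if l ∈ ({i,j} : Finset (Fin n)) then p else 1 := by
      intro l
      by_cases h : l ∈ ({i,j} : Finset (Fin n))
      · simp only [h, if_true]; exact hEind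
      · simp [h]
    simp_rw [h2]
    rw [Finset.prod_ite_mem Finset.univ ({i,j} : Finset (Fin n)) (fun _ => p),
      Finset.univ_inter]
    by_cases hij : i = j
    · subst hij; rw [Finset.pair_eq_singleton, Finset.prod_singleton, if_pos rfl]
    · rw [Finset.prod_pair hij, if_neg hij]
  -- integrability bits
  have hXj_meas : ∀ j : Fin n, Measurable fun ω : Fin n → α => ind (ω j) :=
    fun j => hind_meas.comp (measurable_pi_apply j)
  have hprod_int : ∀ i j : Fin n, Integrable (fun ω : Fin n → α => ind (ω i) * ind (ω j)) π := by
    intro i j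
    refine (integrable_const (1:ℝ)).mono' ((hXj_meas i).mul (hXj_meas j)).aestronglyMeasurable ?_
    filter_upwards with ω
    rw [Real.norm_eq_abs, abs_of_nonneg (mul_nonneg (hind01 _).1 (hind01 _).1)]
    calc ind (ω i) * ind (ω j) ≤ 1 * 1 :=
          mul_le_mul (hind01 _).2 (hind01 _).2 (hind01 _).1 zero_le_one
    _ = 1 := by ring
  have hXj_int : ∀ j : Fin n, Integrable (fun ω : Fin n → α => ind (ω j)) π := by
    intro j
    have := hprod_int j j
    simpa only [hind_sq] using this
  set S : (Fin n → α) → ℝ := fun ω => ∑ j, ind (ω j) with hS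
  have hS_meas : Measurable S := Finset.measurable_sum _ fun j _ => hXj_meas j
  have hS_int : Integrable S π := integrable_finset_sum _ fun j _ => hXj_int j
  have hES : ∫ ω, S ω ∂π = n * p := by
    rw [hS]
    rw [integral_finset_sum _ fun j _ => hXj_int j]
    have : ∀ j : Fin n, ∫ ω, ind (ω j) ∂π = p := by
      intro j
      have h := key j j
      simp only [if_true, eq_self_iff_true] at h
      rw [← h]
      congr 1; funext ω; rw [hind_sq]
    simp [this, Finset.sum_const, Finset.card_univ]
  have hS2eq : ∀ ω, S ω ^ 2 = ∑ i, ∑ j, ind (ω i) * ind (ω j) := by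
    intro ω; rw [hS]; rw [sq, Finset.sum_mul_sum]
  have hS2_int : Integrable (fun ω => S ω ^ 2) π := by
    simp_rw [hS2eq]
    exact integrable_finset_sum _ fun i _ => integrable_finset_sum _ fun j _ => hprod_int i j
  have hES2 : ∫ ω, S ω ^ 2 ∂π = n * p + ((n:ℝ)^2 - n) * (p * p) := by
    simp_rw [hS2eq]
    rw [integral_finset_sum _ fun i _ => integrable_finset_sum _ fun j _ => hprod_int i j]
    have hinner : ∀ i : Fin n, ∫ ω, (∑ j, ind (ω i) * ind (ω j)) ∂π
        = p + ((n:ℝ) - 1) * (p * p) := by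
      intro i
      rw [integral_finset_sum _ fun j _ => hprod_int i j]
      simp_rw [key i]
      have hsplit : ∀ x : Fin n, (if i = x then p else p * p)
          = p * p + (if i = x then p - p * p else 0) := by
        intro x; split <;> ring
      simp_rw [hsplit]
      rw [Finset.sum_add_distrib, Finset.sum_const, Finset.sum_ite_eq Finset.univ i
        (fun _ => p - p * p), if_pos (Finset.mem_univ i), Finset.card_univ, Fintype.card_fin]
      ring
    rw [Finset.sum_congr rfl (fun i _ => hinner i), Finset.sum_const, Finset.card_univ,
      Fintype.card_fin]
    simp only [nsmul_eq_mul]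
    ring
  -- variance bound
  set X : (Fin n → α) → ℝ := fun ω => S ω - n * p with hX
  have hX_meas : Measurable X := hS_meas.sub measurable_const
  have hX2eq : (fun ω => X ω ^ 2)
      = fun ω => S ω ^ 2 - 2 * ((n:ℝ) * p) * S ω + ((n:ℝ) * p) ^ 2 := by
    funext ω; rw [hX]; ring
  have hX2_int : Integrable (fun ω => X ω ^ 2) π := by
    rw [hX2eq]
    exact (hS2_int.sub (hS_int.const_mul _)).add (integrable_const _)
  have hEX2 : ∫ ω, X ω ^ 2 ∂π ≤ n * p := by
    rw [hX2eq]
    have hint2 : Integrable (fun ω => 2 * ((n:ℝ) * p) * S ω) π := hS_int.const_mul _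
    have hint1 : Integrable (fun ω => S ω ^ 2 - 2 * ((n:ℝ) * p) * S ω) π := hS2_int.sub hint2
    rw [integral_add hint1 (integrable_const _), integral_sub hS2_int hint2,
      MeasureTheory.integral_const_mul, hES2, hES, integral_const]
    simp only [measure_univ, probReal_univ, smul_eq_mul, one_mul]
    have hn0 : (0:ℝ) ≤ (n:ℝ) := Nat.cast_nonneg n
    nlinarith [mul_nonneg (mul_nonneg hn0 hp0) hp0]
  -- Markov / Chebyshev
  have hsub : {ω : Fin n → α | t ≤ |(∑ j, ind (ω j)) - n * p|}
      ⊆ {ω | ENNReal.ofReal (t ^ 2) ≤ ENNReal.ofReal (X ω ^ 2)} := by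
    intro ω hω
    simp only [Set.mem_setOf_eq] at hω ⊢
    apply ENNReal.ofReal_le_ofReal
    have h2 : t ^ 2 ≤ |X ω| ^ 2 := pow_le_pow_left₀ ht.le hω 2
    rwa [sq_abs] at h2
  calc π {ω | t ≤ |(∑ j, ind (ω j)) - n * p|}
      ≤ π {ω | ENNReal.ofReal (t ^ 2) ≤ ENNReal.ofReal (X ω ^ 2)} := measure_mono hsub
    _ ≤ (∫⁻ ω, ENNReal.ofReal (X ω ^ 2) ∂π) / ENNReal.ofReal (t ^ 2) := by
        refine meas_ge_le_lintegral_div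
          ((ENNReal.measurable_ofReal.comp (hX_meas.pow_const 2)).aemeasurable) ?_
          ENNReal.ofReal_ne_top
        exact (ENNReal.ofReal_pos.mpr (by positivity)).ne'
    _ = ENNReal.ofReal (∫ ω, X ω ^ 2 ∂π) / ENNReal.ofReal (t ^ 2) := by
        rw [← ofReal_integral_eq_lintegral_ofReal hX2_int
          (Filter.Eventually.of_forall fun ω => sq_nonneg _)]
    _ ≤ ENNReal.ofReal (n * p) / ENNReal.ofReal (t ^ 2) := by
        gcongr
    _ = ENNReal.ofReal (n * p / t ^ 2) := by
        rw [ENNReal.ofReal_div_of_pos (by positivity)]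

end AuxiliaryLemmas

set_option maxHeartbeats 1000000 in
/-- Convergence in probability of the powered k-NN density estimator for the
`Y`-sample: under the regularity/H-boundedness assumptions on `q`, if `γ < k`,
`k(m) → ∞` and `m/k(m) → ∞`, then for a.e. `y` in the support `M'` of `q` and every
`ε > 0`, `P(|q̂_{k(m)}(y)^γ - q(y)^γ| > ε) → 0`, where
`q̂_k(y) = k/((m-1) c̄ ρ̄_k(y)^d)` with `ρ̄_k(y)` the k-NN distance of `y` among
the (other `m-1` points of the) sample. -/
theorem stmt14 {d : ℕ} (hd : 0 < d) (k : ℕ) (hk : 0 < k) (γ : ℝ) (hγk : γ < k)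
    (M' : Set (Pt d)) (q : Pt d → ℝ)
    (hq0 : ∀ x, 0 ≤ q x) (hq1 : ∫ x, q x = 1) (hsupp : Function.support q ⊆ M')
    (haway : ∃ c > 0, ∀ x ∈ M', c ≤ q x)
    (hULA : UnifLebApprox M' q)
    (hH : ∃ δ₀ > 0, ∀ δ ∈ Set.Ioo (0 : ℝ) δ₀,
      IntegrableOn (fun y => Hfun k γ γ q y δ 1 * q y) M') :
    ∀ (kseq : ℕ → ℕ), Tendsto kseq atTop atTop →
      Tendsto (fun m : ℕ => (m : ℝ) / kseq m) atTop atTop →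
    ∀ᵐ y ∂(volume.restrict M'), ∀ ε > 0,
      Tendsto (fun m : ℕ =>
          (Measure.pi fun _ : Fin (m - 1) =>
              volume.withDensity fun t => ENNReal.ofReal (q t))
            {ω : Fin (m - 1) → Pt d |
              ε < |((kseq m : ℝ) / (((m : ℝ) - 1) * unitBallVol d *
                    kNNdist (kseq m) (List.ofFn ω) y ^ d)) ^ γ - q y ^ γ|})
        atTop (𝓝 0) := by
  classical
  obtain ⟨c, hc, hcM⟩ := haway
  intro kseq hks hms
  -- basic integrability / measure facts
  have hqInt : Integrable q := by
    by_contra h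
    rw [integral_undef h] at hq1
    exact one_ne_zero hq1.symm
  have hMeq : M' = Function.support q := by
    apply Set.Subset.antisymm _ hsupp
    intro x hx
    have := hcM x hx
    simp only [Function.mem_support]
    intro h0; rw [h0] at this; linarith
  set ν : Measure (Pt d) := volume.withDensity (fun t => ENNReal.ofReal (q t)) with hνdef
  haveI hνprob : IsProbabilityMeasure ν := by
    constructor
    rw [hνdef, withDensity_apply _ MeasurableSet.univ, Measure.restrict_univ,
      ← ofReal_integral_eq_lintegral_ofReal hqInt (Filter.Eventually.of_forall hq0), hq1,
      ENNReal.ofReal_one]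
  set cb := unitBallVol d with hcbdef
  have hcb : 0 < cb := by
    rw [hcbdef]
    unfold unitBallVol
    exact ENNReal.toReal_pos (Metric.measure_ball_pos volume (0:Pt d) one_pos).ne'
      measure_ball_lt_top.ne
  -- null measurability of M'
  have hNM : NullMeasurableSet M' (volume : Measure (Pt d)) := by
    obtain ⟨q', hq'm, hqq'⟩ := hqInt.aestronglyMeasurable
    have hmeas : MeasurableSet (Function.support q') := by
      rw [Function.support_eq_preimage]
      exact hq'm.measurable (measurableSet_singleton (0:ℝ)).compl
    refine hmeas.nullMeasurableSet.congr ?_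
    rw [Filter.eventuallyEq_set]
    filter_upwards [hqq'] with x hx
    rw [hMeq]
    simp only [Function.mem_support, hx]
  -- Lebesgue differentiation
  have hLeb := IsUnifLocDoublingMeasure.ae_tendsto_average
    (μ := (volume : Measure (Pt d))) (hqInt.locallyIntegrable) 1
  -- ball volume computation
  have hvol : ∀ (y : Pt d) (r : ℝ), 0 < r →
      (volume (Metric.closedBall y r)).toReal = r ^ d * cb := by
    intro y r hr
    rw [Measure.addHaar_closedBall volume y hr.le, ENNReal.toReal_mul,
      ENNReal.toReal_ofReal (by positivity)]
    congr 2
    exact finrank_euclideanSpace_fin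
  have hνball : ∀ (y : Pt d) (r : ℝ),
      (ν (Metric.closedBall y r)).toReal = ∫ t in Metric.closedBall y r, q t := by
    intro y r
    rw [hνdef, withDensity_apply _ measurableSet_closedBall,
      ← ofReal_integral_eq_lintegral_ofReal hqInt.integrableOn
        (Filter.Eventually.of_forall hq0),
      ENNReal.toReal_ofReal (setIntegral_nonneg measurableSet_closedBall fun x _ => hq0 x)]
  -- main a.e. statement
  filter_upwards [ae_restrict_mem₀ hNM,
    hLeb.filter_mono (ae_mono Measure.restrict_le_self)] with y hyM hyLeb
  intro ε hε
  set Q := q y with hQdef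
  have hQ : 0 < Q := lt_of_lt_of_le hc (hcM y hyM)
  -- Lebesgue differentiation at y, sequence form
  have hyLeb' : ∀ (r : ℕ → ℝ), Tendsto r atTop (𝓝[>] 0) →
      Tendsto (fun m => ⨍ t in Metric.closedBall y (r m), q t) atTop (𝓝 Q) := by
    intro r hr
    refine hyLeb (fun _ => y) r hr ?_
    have hpos : ∀ᶠ m in atTop, r m ∈ Set.Ioi (0:ℝ) := hr self_mem_nhdsWithin
    filter_upwards [hpos] with m hm
    simp only [Metric.mem_closedBall, dist_self, one_mul]
    exact le_of_lt hm
  -- choice of η via continuity of rpow at Q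
  obtain ⟨η, hη, hηQ, hηcont⟩ : ∃ η > 0, η < Q ∧
      ∀ u : ℝ, |u - Q| < η → |u ^ γ - Q ^ γ| ≤ ε := by
    have hcont : ContinuousAt (fun u : ℝ => u ^ γ) Q :=
      Real.continuousAt_rpow_const Q γ (Or.inl hQ.ne')
    rw [Metric.continuousAt_iff] at hcont
    obtain ⟨δ, hδ, hδc⟩ := hcont ε hε
    refine ⟨min δ (Q/2), by positivity, lt_of_le_of_lt (min_le_right _ _) (by linarith), ?_⟩
    intro u hu
    have : dist u Q < δ := by
      rw [Real.dist_eq]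
      exact lt_of_lt_of_le hu (min_le_left _ _)
    have := hδc this
    rw [Real.dist_eq] at this
    exact this.le
  -- constants
  set Qp := Q + η with hQpdef
  set Qm := Q - η/2 with hQmdef
  have hQp : 0 < Qp := by rw [hQpdef]; linarith
  have hQm : 0 < Qm := by rw [hQmdef]; linarith
  set a : ℝ := Q / Qp with hadef
  set b : ℝ := Q / Qm with hbdef
  have ha0 : 0 < a := by rw [hadef]; positivity
  have ha1 : a < 1 := by rw [hadef, div_lt_one hQp, hQpdef]; linarith
  have hb1 : 1 < b := by rw [hbdef, lt_div_iff₀ hQm, hQmdef]; linarith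
  have hb0 : 0 < b := by rw [hbdef]; positivity
  set a' : ℝ := (1 + a)/2 with ha'def
  set b' : ℝ := (1 + b)/2 with hb'def
  have haa' : a < a' := by rw [ha'def]; linarith
  have ha'1 : a' < 1 := by rw [ha'def]; linarith
  have ha'0 : 0 < a' := by rw [ha'def]; linarith
  have h1b' : 1 < b' := by rw [hb'def]; linarith
  have hb'b : b' < b := by rw [hb'def]; linarith
  have hsq : ∀ (u v w : ℝ), v ≠ 0 → u / v^2 * (v * w)^2 = u * w^2 := by
    intro u v w hv; field_simp
  -- sequences
  have hdR : (0:ℝ) < (d:ℝ) := by exact_mod_cast hd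
  set nR : ℕ → ℝ := fun m => ((m - 1 : ℕ) : ℝ) with hnRdef
  set zp : ℕ → ℝ := fun m => (kseq m : ℝ) / (nR m * cb * Qp) with hzpdef
  set zm : ℕ → ℝ := fun m => (kseq m : ℝ) / (nR m * cb * Qm) with hzmdef
  set rp : ℕ → ℝ := fun m => zp m ^ ((d:ℝ)⁻¹) with hrpdef
  set rr : ℕ → ℝ := fun m => zm m ^ ((d:ℝ)⁻¹) with hrrdef
  set pp : ℕ → ℝ := fun m => (ν (Metric.closedBall y (rp m))).toReal with hppdef
  set pm : ℕ → ℝ := fun m => (ν (Metric.closedBall y (rr m))).toReal with hpmdef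
  have hpow : ∀ z : ℝ, 0 < z → (z ^ ((d:ℝ)⁻¹)) ^ d = z := by
    intro z hz
    rw [← Real.rpow_natCast (z ^ ((d:ℝ)⁻¹)) d, ← Real.rpow_mul hz.le,
      inv_mul_cancel₀ hdR.ne', Real.rpow_one]
  -- eventual basic facts
  have hev2 : ∀ᶠ m : ℕ in atTop, 2 ≤ m := eventually_ge_atTop 2
  have hevk : ∀ᶠ m in atTop, 1 ≤ kseq m := hks.eventually_ge_atTop 1
  have hevmk : ∀ᶠ m in atTop, 2 * kseq m ≤ m := by
    filter_upwards [hms.eventually_ge_atTop 2, hevk] with m h2 hk1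
    have hkpos : (0:ℝ) < (kseq m : ℝ) := by exact_mod_cast hk1
    rw [le_div_iff₀ hkpos] at h2
    exact_mod_cast h2
  have hevkm : ∀ᶠ m in atTop, kseq m ≤ m - 1 := by
    filter_upwards [hevmk, hevk] with m h hk1; omega
  have hcast : ∀ m : ℕ, 2 ≤ m → nR m = (m:ℝ) - 1 := by
    intro m hm
    rw [hnRdef]
    push_cast [Nat.cast_sub (by omega : 1 ≤ m)]
    ring
  -- k / nR → 0
  have hkm0 : Tendsto (fun m => (kseq m : ℝ) / (m:ℝ)) atTop (𝓝 0) := by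
    have h := hms.inv_tendsto_atTop
    have heq : (fun m : ℕ => ((m:ℝ)/(kseq m : ℝ)))⁻¹ = fun m => (kseq m:ℝ)/(m:ℝ) := by
      funext m; simp [inv_div]
    rwa [heq] at h
  have hkn0 : Tendsto (fun m => (kseq m : ℝ) / nR m) atTop (𝓝 0) := by
    have hup : ∀ᶠ m : ℕ in atTop, (kseq m : ℝ) / nR m ≤ 2 * ((kseq m : ℝ) / (m:ℝ)) := by
      filter_upwards [hev2] with m h2
      have hm2 : (2:ℝ) ≤ (m:ℝ) := by exact_mod_cast h2
      have hnReq := hcast m h2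
      have hnRhalf : (m:ℝ)/2 ≤ nR m := by rw [hnReq]; linarith
      have hk0 : (0:ℝ) ≤ (kseq m : ℝ) := Nat.cast_nonneg _
      calc (kseq m : ℝ) / nR m ≤ (kseq m : ℝ) / ((m:ℝ)/2) := by
            apply div_le_div_of_nonneg_left hk0 (by linarith) hnRhalf
      _ = 2 * ((kseq m : ℝ) / (m:ℝ)) := by ring
    have hlo : ∀ᶠ m : ℕ in atTop, (0:ℝ) ≤ (kseq m : ℝ) / nR m := by
      filter_upwards [hev2] with m h2
      have hnReq := hcast m h2
      have hm2 : (2:ℝ) ≤ (m:ℝ) := by exact_mod_cast h2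
      apply div_nonneg (Nat.cast_nonneg _) (by rw [hnReq]; linarith)
    refine tendsto_of_tendsto_of_tendsto_of_le_of_le' tendsto_const_nhds ?_ hlo hup
    have := hkm0.const_mul (2:ℝ)
    simpa using this
  -- z sequences tend to 0 and are eventually positive
  have hzp0 : Tendsto zp atTop (𝓝 0) := by
    have heq : ∀ m, zp m = (kseq m : ℝ) / nR m * (1/(cb * Qp)) := by
      intro m
      simp only [hzpdef]
      rw [mul_assoc, ← div_div, div_eq_mul_one_div]
    rw [funext heq]
    simpa using hkn0.mul_const (1/(cb*Qp))
  have hzm0 : Tendsto zm atTop (𝓝 0) := by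
    have heq : ∀ m, zm m = (kseq m : ℝ) / nR m * (1/(cb * Qm)) := by
      intro m
      simp only [hzmdef]
      rw [mul_assoc, ← div_div, div_eq_mul_one_div]
    rw [funext heq]
    simpa using hkn0.mul_const (1/(cb*Qm))
  have hnRpos : ∀ᶠ m in atTop, 0 < nR m := by
    filter_upwards [hev2] with m h2
    rw [hcast m h2]
    have hm2 : (2:ℝ) ≤ (m:ℝ) := by exact_mod_cast h2
    linarith
  have hkpos : ∀ᶠ m in atTop, (0:ℝ) < (kseq m : ℝ) := by
    filter_upwards [hevk] with m h
    exact_mod_cast h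
  have hzppos : ∀ᶠ m in atTop, 0 < zp m := by
    filter_upwards [hnRpos, hkpos] with m hnR0 hk0
    rw [hzpdef]
    exact div_pos hk0 (mul_pos (mul_pos hnR0 hcb) hQp)
  have hzmpos : ∀ᶠ m in atTop, 0 < zm m := by
    filter_upwards [hnRpos, hkpos] with m hnR0 hk0
    rw [hzmdef]
    exact div_pos hk0 (mul_pos (mul_pos hnR0 hcb) hQm)
  -- r sequences
  have hrpow : Tendsto (fun x : ℝ => x ^ ((d:ℝ)⁻¹)) (𝓝 0) (𝓝 0) := by
    have h := (Real.continuousAt_rpow_const 0 ((d:ℝ)⁻¹)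
      (Or.inr (by positivity : (0:ℝ) ≤ (d:ℝ)⁻¹))).tendsto
    rwa [Real.zero_rpow (inv_pos.mpr hdR).ne'] at h
  have hrp0 : Tendsto rp atTop (𝓝[>] 0) := by
    rw [tendsto_nhdsWithin_iff]
    constructor
    · exact hrpow.comp hzp0
    · filter_upwards [hzppos] with m hm
      exact Real.rpow_pos_of_pos hm _
  have hrr0 : Tendsto rr atTop (𝓝[>] 0) := by
    rw [tendsto_nhdsWithin_iff]
    constructor
    · exact hrpow.comp hzm0
    · filter_upwards [hzmpos] with m hm
      exact Real.rpow_pos_of_pos hm _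
  have havp := hyLeb' rp hrp0
  have havm := hyLeb' rr hrr0
  -- ratio limits
  have hratio : ∀ (z r : ℕ → ℝ) (W : ℝ), 0 < W →
      (∀ m, z m = (kseq m : ℝ) / (nR m * cb * W)) → (∀ m, r m = z m ^ ((d:ℝ)⁻¹)) →
      (∀ᶠ m in atTop, 0 < z m) →
      Tendsto (fun m => ⨍ t in Metric.closedBall y (r m), q t) atTop (𝓝 Q) →
      Tendsto (fun m => nR m * (ν (Metric.closedBall y (r m))).toReal / (kseq m : ℝ))
        atTop (𝓝 (Q / W)) := by
    intro z r W hW hz hr hzpos hav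
    have heq : ∀ᶠ m in atTop,
        (⨍ t in Metric.closedBall y (r m), q t) / W
          = nR m * (ν (Metric.closedBall y (r m))).toReal / (kseq m : ℝ) := by
      filter_upwards [hzpos, hnRpos, hkpos] with m hzm0 hnR0 hk0
      have hrpos : 0 < r m := by rw [hr]; exact Real.rpow_pos_of_pos hzm0 _
      have hrd : r m ^ d = z m := by rw [hr]; exact hpow _ hzm0
      have hvolpos : (0:ℝ) < (volume (Metric.closedBall y (r m))).toReal :=
        ENNReal.toReal_pos (Metric.measure_closedBall_pos volume y hrpos).ne'
          measure_closedBall_lt_top.ne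
      have hppval : (ν (Metric.closedBall y (r m))).toReal
          = (volume (Metric.closedBall y (r m))).toReal
            * ⨍ t in Metric.closedBall y (r m), q t := by
        rw [hνball, setAverage_eq, smul_eq_mul, measureReal_def, ← mul_assoc,
          mul_inv_cancel₀ hvolpos.ne', one_mul]
      have hvoleq : (volume (Metric.closedBall y (r m))).toReal = z m * cb := by
        rw [hvol y _ hrpos, hrd]
      rw [hppval, hvoleq, hz m]
      field_simp
    exact Tendsto.congr' heq (hav.div_const W)
  have hratio_p : Tendsto (fun m => nR m * pp m / (kseq m : ℝ)) atTop (𝓝 a) := by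
    rw [hppdef, hadef]
    exact hratio zp rp Qp hQp (fun m => by rw [hzpdef]) (fun m => by rw [hrpdef]) hzppos havp
  have hratio_m : Tendsto (fun m => nR m * pm m / (kseq m : ℝ)) atTop (𝓝 b) := by
    rw [hpmdef, hbdef]
    exact hratio zm rr Qm hQm (fun m => by rw [hzmdef]) (fun m => by rw [hrrdef]) hzmpos havm
  -- eventual moment bounds
  have hevE2 : ∀ᶠ m in atTop, nR m * pp m ≤ a' * kseq m := by
    filter_upwards [hratio_p.eventually_lt_const haa', hkpos] with m hlt hk0
    rw [div_lt_iff₀ hk0] at hlt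
    linarith
  have hevE3 : ∀ᶠ m in atTop, b' * kseq m ≤ nR m * pm m := by
    filter_upwards [hratio_m.eventually_const_lt hb'b, hkpos] with m hlt hk0
    rw [lt_div_iff₀ hk0] at hlt
    linarith
  have hevE4 : ∀ᶠ m in atTop, nR m * pm m ≤ (2*b) * kseq m := by
    filter_upwards [hratio_m.eventually_lt_const (by linarith : b < 2*b), hkpos] with m hlt hk0
    rw [div_lt_iff₀ hk0] at hlt
    linarith
  -- the bounding sequence
  set Cp : ℝ := a' / (1-a')^2 with hCpdef
  set Cm : ℝ := (2*b) / (b'-1)^2 with hCmdef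
  set g : ℕ → ℝ≥0∞ := fun m => ENNReal.ofReal (Cp / kseq m) + ENNReal.ofReal (Cm / kseq m)
    with hgdef
  have hkR : Tendsto (fun m => (kseq m:ℝ)) atTop atTop := tendsto_natCast_atTop_atTop.comp hks
  have hg : Tendsto g atTop (𝓝 0) := by
    have h1 : Tendsto (fun m => Cp/(kseq m:ℝ)) atTop (𝓝 0) := tendsto_const_nhds.div_atTop hkR
    have h2 : Tendsto (fun m => Cm/(kseq m:ℝ)) atTop (𝓝 0) := tendsto_const_nhds.div_atTop hkR
    have := (ENNReal.tendsto_ofReal h1).add (ENNReal.tendsto_ofReal h2)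
    simpa [hgdef] using this
  -- the main eventual bound
  have hbound : ∀ᶠ m in atTop, (Measure.pi fun _ : Fin (m - 1) => ν)
      {ω : Fin (m - 1) → Pt d |
        ε < |((kseq m : ℝ) / (((m : ℝ) - 1) * cb *
              kNNdist (kseq m) (List.ofFn ω) y ^ d)) ^ γ - Q ^ γ|} ≤ g m := by
    filter_upwards [hev2, hevk, hevkm, hzppos, hzmpos, hevE2, hevE3, hevE4, hnRpos, hkpos]
      with m h2 hk1 hkm hzp2 hzm2 hE2 hE3 hE4 hnR0 hk0
    have hmcast : ((m:ℝ) - 1) = nR m := (hcast m h2).symm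
    have htp_pos : 0 < (1 - a') * (kseq m : ℝ) := mul_pos (by linarith) hk0
    have htm_pos : 0 < (b' - 1) * (kseq m : ℝ) := mul_pos (by linarith) hk0
    have hrppos : 0 < rp m := Real.rpow_pos_of_pos hzp2 _
    have hrrpos : 0 < rr m := Real.rpow_pos_of_pos hzm2 _
    have hrpd : rp m ^ d = zp m := hpow _ hzp2
    have hrrd : rr m ^ d = zm m := hpow _ hzm2
    have hDp : nR m * cb * rp m ^ d = (kseq m : ℝ) / Qp := by
      simp only [hrpd, hzpdef]
      field_simp
    have hDm : nR m * cb * rr m ^ d = (kseq m : ℝ) / Qm := by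
      simp only [hrrd, hzmdef]
      field_simp
    -- subset into the two Chebyshev events
    have hsubset : {ω : Fin (m - 1) → Pt d |
          ε < |((kseq m : ℝ) / (((m : ℝ) - 1) * cb *
              kNNdist (kseq m) (List.ofFn ω) y ^ d)) ^ γ - Q ^ γ|}
        ⊆ {ω : Fin (m - 1) → Pt d | (1 - a') * (kseq m : ℝ) ≤
              |(∑ j, (Metric.closedBall y (rp m)).indicator (fun _ => (1:ℝ)) (ω j))
                - (m - 1 : ℕ) * (ν (Metric.closedBall y (rp m))).toReal|}
          ∪ {ω : Fin (m - 1) → Pt d | (b' - 1) * (kseq m : ℝ) ≤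
              |(∑ j, (Metric.closedBall y (rr m)).indicator (fun _ => (1:ℝ)) (ω j))
                - (m - 1 : ℕ) * (ν (Metric.closedBall y (rr m))).toReal|} := by
      intro ω hω
      simp only [Set.mem_setOf_eq, hmcast] at hω
      by_contra hnot
      simp only [Set.mem_union, Set.mem_setOf_eq, not_or, not_le] at hnot
      obtain ⟨hn1, hn2⟩ := hnot
      set ρ := kNNdist (kseq m) (List.ofFn ω) y with hρdef
      -- counting consequences
      have h₁ : ¬((kseq m : ℝ) ≤
          ∑ j, (Metric.closedBall y (rp m)).indicator (fun _ => (1:ℝ)) (ω j)) := by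
        intro hle
        have habs : (1 - a') * (kseq m : ℝ) ≤
            |(∑ j, (Metric.closedBall y (rp m)).indicator (fun _ => (1:ℝ)) (ω j))
              - (m - 1 : ℕ) * (ν (Metric.closedBall y (rp m))).toReal| := by
          refine le_trans ?_ (le_abs_self _)
          have : nR m * pp m ≤ a' * kseq m := hE2
          have hnn : ((m - 1 : ℕ) : ℝ) * (ν (Metric.closedBall y (rp m))).toReal
              = nR m * pp m := by rw [hnRdef, hppdef]
          rw [hnn]
          linarith
        linarith [hn1]
      have h₂ : (kseq m : ℝ) ≤
          ∑ j, (Metric.closedBall y (rr m)).indicator (fun _ => (1:ℝ)) (ω j) := by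
        by_contra hlt
        push_neg at hlt
        have hnn : ((m - 1 : ℕ) : ℝ) * (ν (Metric.closedBall y (rr m))).toReal
            = nR m * pm m := by rw [hnRdef, hpmdef]
        have habs : (b' - 1) * (kseq m : ℝ) ≤
            |(∑ j, (Metric.closedBall y (rr m)).indicator (fun _ => (1:ℝ)) (ω j))
              - (m - 1 : ℕ) * (ν (Metric.closedBall y (rr m))).toReal| := by
          rw [abs_sub_comm]
          refine le_trans ?_ (le_abs_self _)
          rw [hnn]
          linarith [hE3]
        linarith [hn2]
      have hρp : rp m < ρ := by
        by_contra hle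
        push_neg at hle
        exact h₁ ((kNN_le_iff_count y ω (kseq m) hk1 hkm (rp m)).mp hle)
      have hρm : ρ ≤ rr m := (kNN_le_iff_count y ω (kseq m) hk1 hkm (rr m)).mpr h₂
      have hρpos : 0 < ρ := lt_trans hrppos hρp
      -- density estimate arithmetic
      have hDpos : 0 < nR m * cb * ρ ^ d :=
        mul_pos (mul_pos hnR0 hcb) (pow_pos hρpos d)
      have hDppos : 0 < nR m * cb * rp m ^ d :=
        mul_pos (mul_pos hnR0 hcb) (pow_pos hrppos d)
      have hlt' : nR m * cb * rp m ^ d < nR m * cb * ρ ^ d := by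
        apply mul_lt_mul_of_pos_left _ (mul_pos hnR0 hcb)
        exact pow_lt_pow_left₀ hρp hrppos.le hd.ne'
      have hle' : nR m * cb * ρ ^ d ≤ nR m * cb * rr m ^ d := by
        apply mul_le_mul_of_nonneg_left _ (mul_pos hnR0 hcb).le
        exact pow_le_pow_left₀ hρpos.le hρm d
      have hqhatlt : (kseq m : ℝ) / (nR m * cb * ρ ^ d) < Qp := by
        have h5 : (kseq m : ℝ) / (nR m * cb * ρ ^ d)
            < (kseq m : ℝ) / (nR m * cb * rp m ^ d) :=
          div_lt_div_of_pos_left hk0 hDppos hlt'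
        have hkk : (kseq m : ℝ) / ((kseq m : ℝ) / Qp) = Qp := by
          rw [div_div_eq_mul_div, mul_comm, mul_div_assoc, div_self hk0.ne', mul_one]
        rwa [hDp, hkk] at h5
      have hqhatge : Qm ≤ (kseq m : ℝ) / (nR m * cb * ρ ^ d) := by
        have h5 : (kseq m : ℝ) / (nR m * cb * rr m ^ d)
            ≤ (kseq m : ℝ) / (nR m * cb * ρ ^ d) :=
          div_le_div_of_nonneg_left hk0.le hDpos hle'
        have hkk : (kseq m : ℝ) / ((kseq m : ℝ) / Qm) = Qm := by
          rw [div_div_eq_mul_div, mul_comm, mul_div_assoc, div_self hk0.ne', mul_one]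
        rwa [hDm, hkk] at h5
      have hclose : |(kseq m : ℝ) / (nR m * cb * ρ ^ d) - Q| < η := by
        rw [abs_lt]
        constructor
        · rw [hQmdef] at hqhatge; linarith
        · rw [hQpdef] at hqhatlt; linarith
      exact absurd hω (not_lt.mpr (hηcont _ hclose))
    refine le_trans (measure_mono hsubset) (le_trans (measure_union_le _ _) ?_)
    refine le_trans (add_le_add
      (cheb_count ν (Metric.closedBall y (rp m)) measurableSet_closedBall (m-1) htp_pos)
      (cheb_count ν (Metric.closedBall y (rr m)) measurableSet_closedBall (m-1) htm_pos)) ?_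
    rw [hgdef]
    have hnnp : ((m - 1 : ℕ) : ℝ) * (ν (Metric.closedBall y (rp m))).toReal
        = nR m * pp m := by rw [hnRdef, hppdef]
    have hnnm : ((m - 1 : ℕ) : ℝ) * (ν (Metric.closedBall y (rr m))).toReal
        = nR m * pm m := by rw [hnRdef, hpmdef]
    apply add_le_add
    · apply ENNReal.ofReal_le_ofReal
      rw [hnnp, div_le_div_iff₀ (by positivity) hk0, hCpdef]
      rw [hsq a' (1-a') (kseq m : ℝ) (by linarith : (1-a') ≠ 0)]
      calc nR m * pp m * (kseq m : ℝ) ≤ (a' * (kseq m : ℝ)) * (kseq m : ℝ) :=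
            mul_le_mul_of_nonneg_right hE2 hk0.le
        _ = a' * (kseq m : ℝ) ^ 2 := by ring
    · apply ENNReal.ofReal_le_ofReal
      rw [hnnm, div_le_div_iff₀ (by positivity) hk0, hCmdef]
      rw [hsq (2*b) (b'-1) (kseq m : ℝ) (by linarith : (b'-1) ≠ 0)]
      calc nR m * pm m * (kseq m : ℝ) ≤ ((2*b) * (kseq m : ℝ)) * (kseq m : ℝ) :=
            mul_le_mul_of_nonneg_right hE4 hk0.le
        _ = (2*b) * (kseq m : ℝ) ^ 2 := by ring
  -- final squeeze
  refine tendsto_of_tendsto_of_tendsto_of_le_of_le' tendsto_const_nhds hg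
    (Filter.Eventually.of_forall fun m => zero_le) hbound
end
end
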